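/- arXiv:0907.3801 — 3 statements merged into one kernel-verified Lean document; each statement's English description precedes it below -/
import Mathlib

section
/- The chromatic number of the square of the toroidal grid satisfies χ(T_{3,3}²) = 9, χ(T_{3,5}²) = 8, and χ(T_{4,4}²) = 8. -/
open SimpleGraph

/-- The type of incidences of a graph `G`: pairs `(v, e)` where `e` is an edge of `G`
incident to the vertex `v`. -/
def Incidence {V : Type*} (G : SimpleGraph V) : Type _ :=
  {p : V × Sym2 V // p.2 ∈ G.edgeSet ∧ p.1 ∈ p.2}

/-- The graph on the incidences of `G` in which two distinct incidences `(v,e)` and `(w,f)`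
are adjacent iff `v = w`, or `e = f`, or the edge `vw` equals `e` or `f`. -/
def incidenceGraph {V : Type*} (G : SimpleGraph V) : SimpleGraph (Incidence G) where
  Adj i j := i ≠ j ∧
    (i.1.1 = j.1.1 ∨ i.1.2 = j.1.2 ∨ s(i.1.1, j.1.1) = i.1.2 ∨ s(i.1.1, j.1.1) = j.1.2)
  symm := by
    constructor
    rintro ⟨⟨v, e⟩, hi⟩ ⟨⟨w, f⟩, hj⟩ ⟨hne, h⟩
    refine ⟨fun h' => hne h'.symm, ?_⟩
    simp only at h ⊢
    rcases h with h | h | h | h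
    · exact Or.inl h.symm
    · exact Or.inr (Or.inl h.symm)
    · exact Or.inr (Or.inr (Or.inr ((Sym2.eq_swap).trans h)))
    · exact Or.inr (Or.inr (Or.inl ((Sym2.eq_swap).trans h)))
  loopless := ⟨fun i h => h.1 rfl⟩

/-- The incidence chromatic number of a graph: the least number of colors in a proper
coloring of its incidences. -/
noncomputable def incidenceChromaticNumber {V : Type*} (G : SimpleGraph V) : ℕ∞ :=
  (incidenceGraph G).chromaticNumber

/-- The square of a graph `G`: distinct vertices are adjacent iff they are at distance
at most 2 in `G`. -/
def SimpleGraph.square {V : Type*} (G : SimpleGraph V) : SimpleGraph V where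
  Adj u v := u ≠ v ∧ (G.Adj u v ∨ ∃ w, G.Adj u w ∧ G.Adj w v)
  symm := by
    constructor
    rintro u v ⟨hne, h | ⟨w, h1, h2⟩⟩
    · exact ⟨hne.symm, Or.inl h.symm⟩
    · exact ⟨hne.symm, Or.inr ⟨w, h2.symm, h1.symm⟩⟩
  loopless := ⟨fun v h => h.1 rfl⟩

/-- The toroidal grid `T_{m,n} = C_m □ C_n`. -/
def toroidalGrid (m n : ℕ) : SimpleGraph (Fin m × Fin n) :=
  SimpleGraph.boxProd (SimpleGraph.cycleGraph m) (SimpleGraph.cycleGraph n)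

instance squareDecidable {V : Type*} [Fintype V] [DecidableEq V] (G : SimpleGraph V)
    [DecidableRel G.Adj] : DecidableRel G.square.Adj := fun u v =>
  decidable_of_iff (u ≠ v ∧ (G.Adj u v ∨ ∃ w, G.Adj u w ∧ G.Adj w v)) Iff.rfl

instance boxProdDecidable {V W : Type*} (G : SimpleGraph V) (H : SimpleGraph W)
    [DecidableEq V] [DecidableEq W] [DecidableRel G.Adj] [DecidableRel H.Adj] :
    DecidableRel (G.boxProd H).Adj := fun _ _ =>
  decidable_of_iff _ (SimpleGraph.boxProd_adj).symm

instance (m n : ℕ) : DecidableRel (toroidalGrid m n).Adj := boxProdDecidable _ _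
instance (m n : ℕ) : DecidableRel (toroidalGrid m n).square.Adj := squareDecidable _

lemma card_le_two_mul {V : Type*} [Fintype V] [DecidableEq V] {G : SimpleGraph V} {k : ℕ}
    (C : G.Coloring (Fin k))
    (h : ∀ u v w : V, u ≠ v → u ≠ w → v ≠ w → G.Adj u v ∨ G.Adj u w ∨ G.Adj v w) :
    Fintype.card V ≤ 2 * k := by
  classical
  have hcard : Fintype.card V =
      ∑ b : Fin k, (Finset.univ.filter (fun a => C a = b)).card := by
    rw [← Finset.card_univ]
    exact Finset.card_eq_sum_card_fiberwise (fun x _ => Finset.mem_univ _)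
  have hfib : ∀ b : Fin k, (Finset.univ.filter (fun a => C a = b)).card ≤ 2 := by
    intro b
    by_contra hb
    push_neg at hb
    obtain ⟨u, v, w, hu, hv, hw, huv, huw, hvw⟩ := Finset.two_lt_card_iff.mp hb
    simp only [Finset.mem_filter] at hu hv hw
    rcases h u v w huv huw hvw with ha | ha | ha
    · exact C.valid ha (hu.2.trans hv.2.symm)
    · exact C.valid ha (hu.2.trans hw.2.symm)
    · exact C.valid ha (hv.2.trans hw.2.symm)
  calc Fintype.card V = _ := hcard
    _ ≤ ∑ _b : Fin k, 2 := Finset.sum_le_sum (fun b _ => hfib b)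
    _ = 2 * k := by simp [mul_comm]

lemma chromEq {V : Type*} {G : SimpleGraph V} {k : ℕ}
    (h1 : G.Colorable (k+1)) (h2 : ¬ G.Colorable k) :
    G.chromaticNumber = (k+1 : ℕ) := by
  refine le_antisymm h1.chromaticNumber_le ?_
  have := (SimpleGraph.chromaticNumber_le_iff_colorable (n := k)).not.mpr h2
  push_neg at this
  exact Order.add_one_le_of_lt (by exact_mod_cast this)

def c33 : Fin 3 × Fin 3 → Fin 9 := fun p => ⟨p.1.val * 3 + p.2.val, by omega⟩
def c35 : Fin 3 × Fin 5 → Fin 8 := fun p =>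
  (![![0,1,2,3,4], ![2,3,0,5,6], ![5,4,6,1,7]] : Fin 3 → Fin 5 → Fin 8) p.1 p.2
def c44 : Fin 4 × Fin 4 → Fin 8 := fun p =>
  (![![0,1,2,3], ![2,3,0,1], ![4,5,6,7], ![6,7,4,5]] : Fin 4 → Fin 4 → Fin 8) p.1 p.2

lemma col33 : (toroidalGrid 3 3).square.Colorable 9 := by
  have h : ∀ v w, (toroidalGrid 3 3).square.Adj v w → c33 v ≠ c33 w := by decide
  exact ⟨SimpleGraph.Coloring.mk c33 (fun {v w} hvw => h v w hvw)⟩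

lemma col35 : (toroidalGrid 3 5).square.Colorable 8 := by
  have h : ∀ v w, (toroidalGrid 3 5).square.Adj v w → c35 v ≠ c35 w := by decide
  exact ⟨SimpleGraph.Coloring.mk c35 (fun {v w} hvw => h v w hvw)⟩

lemma col44 : (toroidalGrid 4 4).square.Colorable 8 := by
  have h : ∀ v w, (toroidalGrid 4 4).square.Adj v w → c44 v ≠ c44 w := by decide
  exact ⟨SimpleGraph.Coloring.mk c44 (fun {v w} hvw => h v w hvw)⟩

lemma not33 : ¬ (toroidalGrid 3 3).square.Colorable 8 := by
  rintro ⟨C⟩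
  have hcomp : ∀ u v : Fin 3 × Fin 3, u ≠ v → (toroidalGrid 3 3).square.Adj u v := by decide
  have hinj : Function.Injective C := by
    intro u v huv
    by_contra hne
    exact C.valid (hcomp u v hne) huv
  have := Fintype.card_le_of_injective C hinj
  simp at this

lemma not35 : ¬ (toroidalGrid 3 5).square.Colorable 7 := by
  rintro ⟨C⟩
  have h : ∀ u v w : Fin 3 × Fin 5, u ≠ v → u ≠ w → v ≠ w →
      (toroidalGrid 3 5).square.Adj u v ∨ (toroidalGrid 3 5).square.Adj u w ∨
      (toroidalGrid 3 5).square.Adj v w := by decide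
  have := card_le_two_mul C h
  simp at this

lemma not44 : ¬ (toroidalGrid 4 4).square.Colorable 7 := by
  rintro ⟨C⟩
  have h : ∀ u v w : Fin 4 × Fin 4, u ≠ v → u ≠ w → v ≠ w →
      (toroidalGrid 4 4).square.Adj u v ∨ (toroidalGrid 4 4).square.Adj u w ∨
      (toroidalGrid 4 4).square.Adj v w := by decide
  have := card_le_two_mul C h
  simp at this

theorem chromatic_square_toroidal_grid_exceptions :
    (toroidalGrid 3 3).square.chromaticNumber = 9 ∧
    (toroidalGrid 3 5).square.chromaticNumber = 8 ∧
    (toroidalGrid 4 4).square.chromaticNumber = 8 := by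
  refine ⟨?_, ?_, ?_⟩
  · have := chromEq col33 not33; exact_mod_cast this
  · have := chromEq col35 not35; exact_mod_cast this
  · have := chromEq col44 not44; exact_mod_cast this
end

section
/- For all integers m, n ≥ 3, the chromatic number of the square of the toroidal grid satisfies χ(T_{m,n}²) = 5 if and only if m ≡ 0 (mod 5) and n ≡ 0 (mod 5). -/
open SimpleGraph

namespace TGAux

/-! ### Abstract combinatorics of rainbow 5-colorings of ℤ² -/

/-- "Far" property: equal colors implies same point or Lee distance ≥ 3. -/
def HF (G : ℤ → ℤ → Fin 5) : Prop :=
  ∀ x y x' y' : ℤ, G x y = G x' y' →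
    (x = x' ∧ y = y') ∨ 3 ≤ (x - x') + (y - y') ∨ 3 ≤ (x - x') - (y - y')
      ∨ 3 ≤ (x' - x) + (y - y') ∨ 3 ≤ (x' - x) + (y' - y)

lemma Gc {G : ℤ → ℤ → Fin 5} {x y x' y' : ℤ} {c : Fin 5} (h : G x y = c)
    (h1 : x = x') (h2 : y = y') : G x' y' = c := h1 ▸ h2 ▸ h

lemma Gc2 {G : ℤ → ℤ → Fin 5} {x y z w x' y' z' w' : ℤ} (h : G x y = G z w)
    (h1 : x = x') (h2 : y = y') (h3 : z = z') (h4 : w = w') : G x' y' = G z' w' :=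
  h1 ▸ h2 ▸ h3 ▸ h4 ▸ h

lemma HFswap {G : ℤ → ℤ → Fin 5} (hf : HF G) : HF (fun x y => G y x) := by
  intro x y x' y' h
  have := hf y x y' x' h
  omega

/-- every "plus" is rainbow: surjectivity -/
lemma plus_surj {G : ℤ → ℤ → Fin 5} (hf : HF G) (x y : ℤ) (c : Fin 5) :
    G x y = c ∨ G (x+1) y = c ∨ G (x-1) y = c ∨ G x (y+1) = c ∨ G x (y-1) = c := by
  classical
  set v : Fin 5 → Fin 5 := ![G x y, G (x+1) y, G (x-1) y, G x (y+1), G x (y-1)] with hv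
  have inj : Function.Injective v := by
    intro a b hab
    fin_cases a <;> fin_cases b <;>
      simp only [hv, Matrix.cons_val_zero, Matrix.cons_val_one, Matrix.head_cons,
        Matrix.cons_val_two, Matrix.tail_cons, Matrix.cons_val_three,
        Matrix.cons_val_four] at hab <;>
      first
        | rfl
        | (exfalso; have := hf _ _ _ _ hab; omega)
  obtain ⟨k, hk⟩ := (Finite.injective_iff_surjective.mp inj) c
  fin_cases k <;> simp only [hv, Matrix.cons_val_zero, Matrix.cons_val_one, Matrix.head_cons,
        Matrix.cons_val_two, Matrix.tail_cons, Matrix.cons_val_three,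
        Matrix.cons_val_four] at hk
  · exact Or.inl hk
  · exact Or.inr (Or.inl hk)
  · exact Or.inr (Or.inr (Or.inl hk))
  · exact Or.inr (Or.inr (Or.inr (Or.inl hk)))
  · exact Or.inr (Or.inr (Or.inr (Or.inr hk)))

/-- NE quadrant dichotomy -/
lemma quadNE {G : ℤ → ℤ → Fin 5} (hf : HF G) (x y : ℤ) :
    G (x+2) (y+1) = G x y ∨ G (x+1) (y+2) = G x y := by
  rcases plus_surj hf (x+1) (y+1) (G x y) with h | h | h | h | h
  · exfalso; have := hf _ _ _ _ h; omega
  · exact Or.inl (Gc h (by ring) (by ring))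
  · exfalso; have := hf _ _ _ _ h; omega
  · exact Or.inr (Gc h (by ring) (by ring))
  · exfalso; have := hf _ _ _ _ h; omega

lemma quadNW {G : ℤ → ℤ → Fin 5} (hf : HF G) (x y : ℤ) :
    G (x-2) (y+1) = G x y ∨ G (x-1) (y+2) = G x y := by
  rcases plus_surj hf (x-1) (y+1) (G x y) with h | h | h | h | h
  · exfalso; have := hf _ _ _ _ h; omega
  · exfalso; have := hf _ _ _ _ h; omega
  · exact Or.inl (Gc h (by ring) (by ring))
  · exact Or.inr (Gc h (by ring) (by ring))
  · exfalso; have := hf _ _ _ _ h; omega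

lemma quadSE {G : ℤ → ℤ → Fin 5} (hf : HF G) (x y : ℤ) :
    G (x+2) (y-1) = G x y ∨ G (x+1) (y-2) = G x y := by
  rcases plus_surj hf (x+1) (y-1) (G x y) with h | h | h | h | h
  · exfalso; have := hf _ _ _ _ h; omega
  · exact Or.inl (Gc h (by ring) (by ring))
  · exfalso; have := hf _ _ _ _ h; omega
  · exfalso; have := hf _ _ _ _ h; omega
  · exact Or.inr (Gc h (by ring) (by ring))

lemma quadSW {G : ℤ → ℤ → Fin 5} (hf : HF G) (x y : ℤ) :
    G (x-2) (y-1) = G x y ∨ G (x-1) (y-2) = G x y := by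
  rcases plus_surj hf (x-1) (y-1) (G x y) with h | h | h | h | h
  · exfalso; have := hf _ _ _ _ h; omega
  · exfalso; have := hf _ _ _ _ h; omega
  · exact Or.inl (Gc h (by ring) (by ring))
  · exfalso; have := hf _ _ _ _ h; omega
  · exact Or.inr (Gc h (by ring) (by ring))

/-- Forcing: if (x,y) and its (2,1)-translate share a color, the whole "R-cross" does. -/
lemma forceNE {G : ℤ → ℤ → Fin 5} (hf : HF G) (x y : ℤ) (h0 : G (x+2) (y+1) = G x y) :
    G (x-1) (y+2) = G x y ∧ G (x+1) (y-2) = G x y ∧ G (x-2) (y-1) = G x y := by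
  have h1 : G (x-1) (y+2) = G x y := by
    rcases quadNW hf x y with h1 | h1
    · exfalso
      have h2 : G x (y+3) = G x y := by
        rcases plus_surj hf x (y+2) (G x y) with h | h | h | h | h
        · exfalso; have := hf _ _ _ _ h; omega
        · exfalso; have := hf _ _ _ _ (h.trans h0.symm); omega
        · exfalso; have := hf _ _ _ _ (h.trans h1.symm); omega
        · exact Gc h rfl (by ring)
        · exfalso; have := hf _ _ _ _ h; omega
      rcases plus_surj hf (x+1) (y+2) (G x y) with h | h | h | h | h
      · have := hf _ _ _ _ (h.trans h0.symm); omega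
      · have := hf _ _ _ _ (h.trans h0.symm); omega
      · have := hf _ _ _ _ h; omega
      · have := hf _ _ _ _ (h.trans h2.symm); omega
      · have := hf _ _ _ _ h; omega
    · exact h1
  have h2 : G (x+1) (y-2) = G x y := by
    rcases quadSE hf x y with h | h
    · exfalso; have := hf _ _ _ _ (h.trans h0.symm); omega
    · exact h
  have h3 : G (x-2) (y-1) = G x y := by
    rcases quadSW hf x y with h | h
    · exact h
    · exfalso; have := hf _ _ _ _ (h.trans h2.symm); omega
  exact ⟨h1, h2, h3⟩

lemma forceNE' {G : ℤ → ℤ → Fin 5} (hf : HF G) (x y : ℤ) (h0 : G (x+1) (y+2) = G x y) :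
    G (x+2) (y-1) = G x y ∧ G (x-2) (y+1) = G x y ∧ G (x-1) (y-2) = G x y := by
  have h := forceNE (G := fun x y => G y x) (HFswap hf) y x h0
  exact ⟨h.1, h.2.1, h.2.2⟩

lemma Rsucc {G : ℤ → ℤ → Fin 5} (hf : HF G) (x y : ℤ) (h0 : G (x+2) (y+1) = G x y) :
    G (x+4) (y+2) = G x y := by
  rcases quadNE hf (x+2) (y+1) with h | h
  · exact Gc (h.trans h0) (by ring) (by ring)
  · exfalso
    have h3 := (forceNE' hf (x+2) (y+1) (Gc h (by ring) (by ring))).2.2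
    have := hf _ _ _ _ ((h3.trans h0).trans (rfl : G x y = G x y).symm)
    omega

/-- Lattice lemma: if the R-rule holds at (x,y), the color class of (x,y) contains
the whole lattice generated by (2,1) and (-1,2), with the R-rule at each point. -/
lemma lat {G : ℤ → ℤ → Fin 5} (hf : HF G) (x y : ℤ) (h0 : G (x+2) (y+1) = G x y) :
    ∀ a b : ℤ, G (x + 2*a - b) (y + a + 2*b) = G x y
      ∧ G (x + 2*a - b + 2) (y + a + 2*b + 1) = G x y := by
  have stepAp : ∀ u v : ℤ, G u v = G x y → G (u+2) (v+1) = G x y →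
      G (u+4) (v+2) = G x y := fun u v h1 h2 => (Rsucc hf u v (h2.trans h1.symm)).trans h1
  have stepAm : ∀ u v : ℤ, G u v = G x y → G (u+2) (v+1) = G x y →
      G (u-2) (v-1) = G x y := fun u v h1 h2 =>
    ((forceNE hf u v (h2.trans h1.symm)).2.2).trans h1
  have stepBp : ∀ u v : ℤ, G u v = G x y → G (u+2) (v+1) = G x y →
      G (u-1) (v+2) = G x y ∧ G (u+1) (v+3) = G x y := by
    intro u v h1 h2
    have hmem : G (u-1) (v+2) = G x y := ((forceNE hf u v (h2.trans h1.symm)).1).trans h1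
    refine ⟨hmem, ?_⟩
    rcases quadNE hf (u-1) (v+2) with h | h
    · exact Gc ((h.trans hmem)) (by ring) (by ring)
    · exfalso
      have h3 := (forceNE' hf (u-1) (v+2) (Gc h (by ring) (by ring))).2.2
      have := hf _ _ _ _ ((Gc h3 (by ring) (by ring) : G (u-2) v = G (u-1) (v+2)).trans
        hmem |>.trans h1.symm)
      omega
  have stepBm : ∀ u v : ℤ, G u v = G x y → G (u+2) (v+1) = G x y →
      G (u+1) (v-2) = G x y ∧ G (u+3) (v-1) = G x y := by
    intro u v h1 h2
    have hmem : G (u+1) (v-2) = G x y := ((forceNE hf u v (h2.trans h1.symm)).2.1).trans h1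
    refine ⟨hmem, ?_⟩
    rcases quadNE hf (u+1) (v-2) with h | h
    · exact Gc (h.trans hmem) (by ring) (by ring)
    · exfalso
      have hc : G (u+2) v = G x y :=
        (Gc h (by ring) (by ring) : G (u+2) v = G (u+1) (v-2)).trans hmem
      have := hf _ _ _ _ (hc.trans h2.symm)
      omega
  have HA : ∀ a : ℤ, G (x + 2*a) (y + a) = G x y ∧ G (x + 2*a + 2) (y + a + 1) = G x y := by
    intro a
    induction a using Int.induction_on with
    | zero => exact ⟨Gc rfl (by ring) (by ring), Gc h0 (by ring) (by ring)⟩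
    | succ a ih =>
      refine ⟨Gc ih.2 (by push_cast; ring) (by push_cast; ring), ?_⟩
      exact Gc (stepAp _ _ ih.1 ih.2) (by push_cast; ring) (by push_cast; ring)
    | pred a ih =>
      refine ⟨Gc (stepAm _ _ ih.1 ih.2) (by push_cast; ring) (by push_cast; ring), ?_⟩
      exact Gc ih.1 (by push_cast; ring) (by push_cast; ring)
  intro a b
  induction b using Int.induction_on with
  | zero => exact ⟨Gc (HA a).1 (by ring) (by ring), Gc (HA a).2 (by ring) (by ring)⟩
  | succ b ih =>
    obtain ⟨h1, h2⟩ := stepBp _ _ ih.1 ih.2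
    exact ⟨Gc h1 (by push_cast; ring) (by push_cast; ring),
      Gc h2 (by push_cast; ring) (by push_cast; ring)⟩
  | pred b ih =>
    obtain ⟨h1, h2⟩ := stepBm _ _ ih.1 ih.2
    exact ⟨Gc h1 (by push_cast; ring) (by push_cast; ring),
      Gc h2 (by push_cast; ring) (by push_cast; ring)⟩

/-- the R-rule propagates to the four neighbours -/
lemma Rstep {G : ℤ → ℤ → Fin 5} (hf : HF G) (x y : ℤ) (h0 : G (x+2) (y+1) = G x y)
    (dx dy : ℤ) (hd : (dx = 1 ∧ dy = 0) ∨ (dx = -1 ∧ dy = 0) ∨ (dx = 0 ∧ dy = 1)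
      ∨ (dx = 0 ∧ dy = -1)) :
    G (x+dx+2) (y+dy+1) = G (x+dx) (y+dy) := by
  rcases quadNE hf (x+dx) (y+dy) with h | h
  · exact h
  · exfalso
    have latL := lat (G := fun x y => G y x) (HFswap hf) (y+dy) (x+dx) h
    have latR := lat hf x y h0
    rcases hd with ⟨h1, h2⟩ | ⟨h1, h2⟩ | ⟨h1, h2⟩ | ⟨h1, h2⟩ <;> subst h1 <;> subst h2
    · have e1 : G (x+3) (y+4) = G x y := Gc (latR 2 1).1 (by ring) (by ring)
      have e2 : G (x+3) (y+4) = G (x+1) (y+0) := Gc (latL 2 0).1 (by ring) (by ring)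
      have := hf _ _ _ _ (e1.symm.trans e2)
      omega
    · have e1 : G (x-3) (y+1) = G x y := Gc (latR (-1) 1).1 (by ring) (by ring)
      have e2 : G (x-3) (y+1) = G (x+(-1)) (y+0) := Gc (latL 0 (-1)).1 (by ring) (by ring)
      have := hf _ _ _ _ (e1.symm.trans e2)
      omega
    · have e1 : G (x+1) (y-2) = G x y := Gc (latR 0 (-1)).1 (by ring) (by ring)
      have e2 : G (x+1) (y-2) = G (x+0) (y+1) := Gc (latL (-1) 1).1 (by ring) (by ring)
      have := hf _ _ _ _ (e1.symm.trans e2)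
      omega
    · have e1 : G (x-1) (y-3) = G x y := Gc (latR (-1) (-1)).1 (by ring) (by ring)
      have e2 : G (x-1) (y-3) = G (x+0) (y+(-1)) := Gc (latL (-1) 0).1 (by ring) (by ring)
      have := hf _ _ _ _ (e1.symm.trans e2)
      omega

lemma Rglob {G : ℤ → ℤ → Fin 5} (hf : HF G) (h0 : G 2 1 = G 0 0) :
    ∀ x y : ℤ, G (x+2) (y+1) = G x y := by
  have base : G (0+2) (0+1) = G 0 0 := by norm_num [h0]
  have hx : ∀ x : ℤ, G (x+2) (0+1) = G x 0 := by
    intro x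
    induction x using Int.induction_on with
    | zero => exact base
    | succ a ih =>
      refine Gc2 (Rstep hf a 0 ih 1 0 (by norm_num)) ?_ ?_ ?_ ?_ <;> push_cast <;> ring
    | pred a ih =>
      refine Gc2 (Rstep hf (-(a:ℤ)) 0 ih (-1) 0 (by norm_num)) ?_ ?_ ?_ ?_ <;>
        push_cast <;> ring
  intro x y
  induction y using Int.induction_on with
  | zero => exact hx x
  | succ b ih =>
    refine Gc2 (Rstep hf x b ih 0 1 (by norm_num)) ?_ ?_ ?_ ?_ <;> push_cast <;> ring
  | pred b ih =>
    refine Gc2 (Rstep hf x (-(b:ℤ)) ih 0 (-1) (by norm_num)) ?_ ?_ ?_ ?_ <;>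
      push_cast <;> ring

lemma fermat4 {m : ℕ} (h : ¬ (5 ∣ m)) : (5:ℤ) ∣ (m:ℤ)^4 - 1 := by
  haveI : Fact (Nat.Prime 5) := ⟨by norm_num⟩
  have hm0 : (m : ZMod 5) ≠ 0 := fun h0 =>
    h ((ZMod.natCast_eq_zero_iff m 5).mp h0)
  have h4 : (m : ZMod 5)^4 = 1 := ZMod.pow_card_sub_one_eq_one hm0
  have := (ZMod.intCast_zmod_eq_zero_iff_dvd ((m:ℤ)^4 - 1) 5).mp (by push_cast; rw [h4]; ring)
  exact_mod_cast this

lemma mainR {G : ℤ → ℤ → Fin 5} (m n : ℕ) (hf : HF G)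
    (hper1 : ∀ x y : ℤ, G (x + m) y = G x y) (hper2 : ∀ x y : ℤ, G x (y + n) = G x y)
    (h0 : G 2 1 = G 0 0) : 5 ∣ m ∧ 5 ∣ n := by
  have hR := Rglob hf h0
  have Linv : ∀ x y a b : ℤ, G (x + 2*a - b) (y + a + 2*b) = G x y :=
    fun x y a b => (lat hf x y (hR x y) a b).1
  have perk1 : ∀ (k : ℕ) (x y : ℤ), G (x + k * m) y = G x y := by
    intro k
    induction k with
    | zero => intro x y; norm_num
    | succ k ih =>
      intro x y
      have h1 : G (x + k*m + m) y = G (x + k*m) y := hper1 _ y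
      exact (Gc2 h1 (by push_cast; ring) rfl rfl rfl).trans (ih x y)
  have perk2 : ∀ (k : ℕ) (x y : ℤ), G x (y + k * n) = G x y := by
    intro k
    induction k with
    | zero => intro x y; norm_num
    | succ k ih =>
      intro x y
      have h1 : G x (y + k*n + n) = G x (y + k*n) := hper2 x _
      exact (Gc2 h1 rfl (by push_cast; ring) rfl rfl).trans (ih x y)
  constructor
  · by_contra h5
    obtain ⟨j, hj⟩ := fermat4 h5
    have e1 : G (1 + 5*j) 0 = G 1 0 := Gc2 (Linv 1 0 (2*j) (-j)) (by ring) (by ring) rfl rfl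
    have e2 : G (0 + (m^3 : ℕ) * m) 0 = G 0 0 := perk1 (m^3) 0 0
    have hj' : ((m:ℤ))^3 * m = 1 + 5*j := by
      rw [show ((m:ℤ))^3 * m = (m:ℤ)^4 by ring]; omega
    have e3 : G (1 + 5*j) 0 = G 0 0 := by
      refine (Gc2 e2 ?_ rfl rfl rfl).symm.symm
      push_cast
      linarith [hj']
    have := hf _ _ _ _ (e1.symm.trans e3)
    omega
  · by_contra h5
    obtain ⟨j, hj⟩ := fermat4 h5
    have e1 : G 0 (1 + 5*j) = G 0 1 := Gc2 (Linv 0 1 j (2*j)) (by ring) (by ring) rfl rfl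
    have e2 : G 0 (0 + (n^3 : ℕ) * n) = G 0 0 := perk2 (n^3) 0 0
    have hj' : ((n:ℤ))^3 * n = 1 + 5*j := by
      rw [show ((n:ℤ))^3 * n = (n:ℤ)^4 by ring]; omega
    have e3 : G 0 (1 + 5*j) = G 0 0 := by
      refine Gc2 e2 rfl ?_ rfl rfl
      push_cast
      linarith [hj']
    have := hf _ _ _ _ (e1.symm.trans e3)
    omega

/-- Main abstract theorem: a 5-coloring of ℤ² with the "far" property and periods m, n
forces 5 ∣ m and 5 ∣ n. -/
lemma hardMain {G : ℤ → ℤ → Fin 5} (m n : ℕ) (hf : HF G)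
    (hper1 : ∀ x y : ℤ, G (x + m) y = G x y) (hper2 : ∀ x y : ℤ, G x (y + n) = G x y) :
    5 ∣ m ∧ 5 ∣ n := by
  rcases quadNE hf 0 0 with h | h
  · exact mainR m n hf hper1 hper2 (Gc2 h (by ring) (by ring) rfl rfl)
  · have h' := mainR (G := fun x y => G y x) n m (HFswap hf)
      (fun x y => hper2 y x) (fun x y => hper1 y x)
      (Gc2 (G := fun x y => G y x) h (by ring) (by ring) rfl rfl)
    exact ⟨h'.2, h'.1⟩

/-! ### Lifting the torus to ℤ² -/

def ι (m : ℕ) (hm : 0 < m) (x : ℤ) : Fin m :=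
  ⟨(x % m).toNat, by
    have h1 := Int.emod_nonneg x (show (m:ℤ) ≠ 0 by exact_mod_cast hm.ne')
    have h2 := Int.emod_lt_of_pos x (show (0:ℤ) < m by exact_mod_cast hm)
    omega⟩

lemma ι_val (m : ℕ) (hm : 0 < m) (x : ℤ) : ((ι m hm x).val : ℤ) = x % m := by
  have h1 := Int.emod_nonneg x (show (m:ℤ) ≠ 0 by exact_mod_cast hm.ne')
  simp only [ι]
  omega

lemma ι_eq_iff (m : ℕ) (hm : 0 < m) {x y : ℤ} :
    ι m hm x = ι m hm y ↔ (m:ℤ) ∣ x - y := by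
  rw [Fin.ext_iff]
  have h1 := ι_val m hm x
  have h2 := ι_val m hm y
  constructor
  · intro h
    have : x % m = y % m := by omega
    exact Int.dvd_of_emod_eq_zero (Int.emod_eq_emod_iff_emod_sub_eq_zero.mp this)
  · intro h
    have : x % m = y % m :=
      Int.emod_eq_emod_iff_emod_sub_eq_zero.mpr (Int.emod_eq_zero_of_dvd h)
    omega

lemma ι_of_val (m : ℕ) (hm : 0 < m) (a : Fin m) : ι m hm (a.val : ℤ) = a := by
  rw [Fin.ext_iff]
  have h1 := ι_val m hm (a.val : ℤ)
  have h2 : ((a.val : ℤ)) % m = a.val := Int.emod_eq_of_lt (by positivity) (by exact_mod_cast a.2)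
  omega

lemma ι_val_of (m : ℕ) (hm : 0 < m) {z : ℤ} (h1 : 0 ≤ z) (h2 : z < m) :
    ((ι m hm z).val : ℤ) = z := by
  rw [ι_val, Int.emod_eq_of_lt h1 h2]

lemma ι_adj (m : ℕ) (hm3 : 3 ≤ m) (x : ℤ) :
    (cycleGraph m).Adj (ι m (by omega) (x+1)) (ι m (by omega) x) := by
  have hm : 0 < m := by omega
  rw [cycleGraph_adj']
  left
  rw [Fin.sub_def]
  have h1 := ι_val m hm x
  have h2 := ι_val m hm (x+1)
  have h3 := Int.emod_nonneg x (show (m:ℤ) ≠ 0 by exact_mod_cast hm.ne')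
  have h4 := Int.emod_lt_of_pos x (show (0:ℤ) < m by exact_mod_cast hm)
  have h1m : (1:ℤ) % m = 1 := Int.emod_eq_of_lt (by norm_num) (by exact_mod_cast (by omega : 1 < m))
  have hadd : (x+1) % m = (x % m + 1) % m := by
    rw [Int.add_emod, h1m]
  change (m - (ι m hm x).val + (ι m hm (x+1)).val) % m = 1
  have hvx := (ι m hm x).2
  have hvx1 := (ι m hm (x+1)).2
  rcases lt_or_eq_of_le (by omega : x % m + 1 ≤ m) with hlt | heq
  · have h5 : (x+1) % m = x % m + 1 := by
      rw [hadd, Int.emod_eq_of_lt (by omega) hlt]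
    have e2 : m - (ι m hm x).val + (ι m hm (x+1)).val = m + 1 := by omega
    rw [e2, Nat.add_mod_left, Nat.mod_eq_of_lt (by omega)]
  · have h5 : (x+1) % m = 0 := by
      rw [hadd, heq]
      simp
    have e3 : m - (ι m hm x).val + (ι m hm (x+1)).val = 1 := by omega
    rw [e3, Nat.mod_eq_of_lt (by omega)]

lemma sub_val_one {m : ℕ} (hm : 3 ≤ m) {p q : Fin m} (h : (p - q).val = 1) :
    p.val = q.val + 1 ∨ (q.val = m - 1 ∧ p.val = 0) := by
  rw [Fin.sub_def] at h
  simp only at h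
  have hp := p.2
  have hq := q.2
  rcases Nat.lt_or_ge (m - q.val + p.val) m with hlt | hge
  · rw [Nat.mod_eq_of_lt hlt] at h
    omega
  · rw [Nat.mod_eq_sub_mod hge, Nat.mod_eq_of_lt (by omega)] at h
    omega

/-- lift a cycle edge to ℤ -/
lemma cyc_lift {m : ℕ} (hm : 3 ≤ m) {p q : Fin m} (h : (cycleGraph m).Adj p q) :
    ∃ (x ε : ℤ), (ε = 1 ∨ ε = -1) ∧ p = ι m (by omega) (x + ε) ∧ q = ι m (by omega) x := by
  have hm0 : 0 < m := by omega
  have hp := p.2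
  have hq := q.2
  rw [cycleGraph_adj'] at h
  rcases h with h | h
  · rcases sub_val_one hm h with ⟨h1⟩ | ⟨h1, h2⟩
    · refine ⟨(q.val : ℤ), 1, Or.inl rfl, ?_, (ι_of_val m hm0 q).symm⟩
      rw [Fin.ext_iff]
      have := ι_val_of m hm0 (z := (q.val : ℤ) + 1) (by positivity)
        (by exact_mod_cast (by omega : q.val + 1 < m))
      omega
    · refine ⟨((m:ℤ) - 1), 1, Or.inl rfl, ?_, ?_⟩
      · rw [Fin.ext_iff]
        have : ((m:ℤ) - 1 + 1) = m := by ring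
        rw [this]
        have := ι_val m hm0 (m : ℤ)
        have hmm : (m:ℤ) % m = 0 := Int.emod_self
        omega
      · rw [Fin.ext_iff]
        have := ι_val_of m hm0 (z := (m:ℤ) - 1) (by omega) (by omega)
        omega
  · rcases sub_val_one hm h with ⟨h1⟩ | ⟨h1, h2⟩
    · refine ⟨(q.val : ℤ), -1, Or.inr rfl, ?_, (ι_of_val m hm0 q).symm⟩
      rw [Fin.ext_iff]
      have := ι_val_of m hm0 (z := (q.val : ℤ) + -1) (by omega) (by omega)
      omega
    · refine ⟨0, -1, Or.inr rfl, ?_, ?_⟩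
      · rw [Fin.ext_iff]
        have h3 : ((0:ℤ) + -1) % m = (m:ℤ) - 1 := by
          have : ((0:ℤ) + -1) = (m - 1) + (m:ℤ)*(-1) := by ring
          rw [this, Int.add_mul_emod_self_left, Int.emod_eq_of_lt (by omega) (by omega)]
        have := ι_val m hm0 ((0:ℤ) + -1)
        omega
      · rw [Fin.ext_iff]
        have := ι_val_of m hm0 (z := (0:ℤ)) (by omega) (by omega)
        omega

/-! ### The torus layer -/

section Torus
variable (m n : ℕ) (hm : 3 ≤ m) (hn : 3 ≤ n)

def πt (x y : ℤ) : Fin m × Fin n := (ι m (by omega) x, ι n (by omega) y)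

lemma square_adj {V : Type*} (G : SimpleGraph V) (u v : V) :
    G.square.Adj u v ↔ u ≠ v ∧ (G.Adj u v ∨ ∃ w, G.Adj u w ∧ G.Adj w v) := Iff.rfl

variable {m n hm hn}
local notation "π" => πt m n hm hn

lemma πt_congr {x y x' y' : ℤ} (h1 : x = x') (h2 : y = y') : π x y = π x' y' := by
  rw [h1, h2]

lemma π_eq_of {x y x' y' : ℤ} (h1 : (m:ℤ) ∣ x - x') (h2 : (n:ℤ) ∣ y - y') :
    π x y = π x' y' := by
  unfold πt
  rw [Prod.mk.injEq, ι_eq_iff, ι_eq_iff]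
  exact ⟨h1, h2⟩

lemma π_inj {x y x' y' : ℤ} (h : π x y = π x' y') :
    (m:ℤ) ∣ x - x' ∧ (n:ℤ) ∣ y - y' := by
  unfold πt at h
  rw [Prod.mk.injEq, ι_eq_iff, ι_eq_iff] at h
  exact h

lemma π_ne {x y x' y' : ℤ} (h : ¬ ((m:ℤ) ∣ x - x') ∨ ¬ ((n:ℤ) ∣ y - y')) :
    π x y ≠ π x' y' := by
  intro hc
  have := π_inj hc
  tauto

lemma tadjH (x y : ℤ) : (toroidalGrid m n).Adj (π (x+1) y) (π x y) := by
  unfold toroidalGrid πt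
  rw [boxProd_adj]
  exact Or.inl ⟨ι_adj m hm x, rfl⟩

lemma tadjV (x y : ℤ) : (toroidalGrid m n).Adj (π x (y+1)) (π x y) := by
  unfold toroidalGrid πt
  rw [boxProd_adj]
  exact Or.inr ⟨ι_adj n hn y, rfl⟩

lemma sqH1 (x y : ℤ) : (toroidalGrid m n).square.Adj (π (x+1) y) (π x y) := by
  rw [square_adj]
  refine ⟨π_ne (Or.inl ?_), Or.inl (tadjH x y)⟩
  intro hd
  have : (x + 1 - x) = 1 := by ring
  rw [this] at hd
  have := Int.le_of_dvd one_pos hd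
  omega

lemma sqH2 (x y : ℤ) : (toroidalGrid m n).square.Adj (π (x+2) y) (π x y) := by
  rw [square_adj]
  refine ⟨π_ne (Or.inl ?_), Or.inr ⟨π (x+1) y, ?_, tadjH x y⟩⟩
  · intro hd
    have : (x + 2 - x) = 2 := by ring
    rw [this] at hd
    have := Int.le_of_dvd two_pos hd
    omega
  · have := tadjH (m := m) (n := n) (hm := hm) (hn := hn) (x+1) y
    exact (πt_congr (by ring) rfl : π (x+1+1) y = π (x+2) y) ▸ this

lemma sqV1 (x y : ℤ) : (toroidalGrid m n).square.Adj (π x (y+1)) (π x y) := by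
  rw [square_adj]
  refine ⟨π_ne (Or.inr ?_), Or.inl (tadjV x y)⟩
  intro hd
  have : (y + 1 - y) = 1 := by ring
  rw [this] at hd
  have := Int.le_of_dvd one_pos hd
  omega

lemma sqV2 (x y : ℤ) : (toroidalGrid m n).square.Adj (π x (y+2)) (π x y) := by
  rw [square_adj]
  refine ⟨π_ne (Or.inr ?_), Or.inr ⟨π x (y+1), ?_, tadjV x y⟩⟩
  · intro hd
    have : (y + 2 - y) = 2 := by ring
    rw [this] at hd
    have := Int.le_of_dvd two_pos hd
    omega
  · have := tadjV (m := m) (n := n) (hm := hm) (hn := hn) x (y+1)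
    exact (πt_congr rfl (by ring) : π x (y+1+1) = π x (y+2)) ▸ this

lemma sqD (x y e : ℤ) (he : e = 1 ∨ e = -1) :
    (toroidalGrid m n).square.Adj (π (x+1) (y+e)) (π x y) := by
  rw [square_adj]
  refine ⟨π_ne (Or.inl ?_), Or.inr ⟨π (x+1) y, ?_, tadjH x y⟩⟩
  · intro hd
    have : (x + 1 - x) = 1 := by ring
    rw [this] at hd
    have := Int.le_of_dvd one_pos hd
    omega
  · rcases he with rfl | rfl
    · exact tadjV (x+1) y
    · have := tadjV (m := m) (n := n) (hm := hm) (hn := hn) (x+1) (y + -1)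
      exact ((πt_congr rfl (by ring) : π (x+1) (y + -1 + 1) = π (x+1) y) ▸ this).symm

/-- lift a torus edge to ℤ² -/
lemma tedge_lift {a b : Fin m × Fin n} (h : (toroidalGrid m n).Adj a b) :
    ∃ x y ε : ℤ, (ε = 1 ∨ ε = -1) ∧
      ((a = π (x+ε) y ∧ b = π x y) ∨ (a = π x (y+ε) ∧ b = π x y)) := by
  unfold toroidalGrid at h
  rw [boxProd_adj] at h
  rcases h with ⟨hc, he⟩ | ⟨hc, he⟩
  · obtain ⟨x, ε, hε, hp, hq⟩ := cyc_lift hm hc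
    refine ⟨x, (b.2.val : ℤ), ε, hε, Or.inl ⟨?_, ?_⟩⟩
    · exact Prod.ext_iff.mpr ⟨hp, he.trans (ι_of_val n (by omega) b.2).symm⟩
    · exact Prod.ext_iff.mpr ⟨hq, (ι_of_val n (by omega) b.2).symm⟩
  · obtain ⟨y, ε, hε, hp, hq⟩ := cyc_lift hn hc
    refine ⟨(b.1.val : ℤ), y, ε, hε, Or.inr ⟨?_, ?_⟩⟩
    · exact Prod.ext_iff.mpr ⟨he.trans (ι_of_val m (by omega) b.1).symm, hp⟩
    · exact Prod.ext_iff.mpr ⟨(ι_of_val m (by omega) b.1).symm, hq⟩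

lemma Ccong2 (C : (toroidalGrid m n).square.Coloring (Fin 5)) {x y z w x' y' z' w' : ℤ}
    (h1 : x = x') (h2 : y = y') (h3 : z = z') (h4 : w = w')
    (h : C (π x y) = C (π z w)) : C (π x' y') = C (π z' w') :=
  h1 ▸ h2 ▸ h3 ▸ h4 ▸ h

set_option maxHeartbeats 1600000 in
lemma HFmain (C : (toroidalGrid m n).square.Coloring (Fin 5)) :
    HF (fun x y => C (π x y)) := by
  intro x y x' y' h
  simp only at h
  by_contra hcon
  push_neg at hcon
  obtain ⟨hne, h1, h2, h3, h4⟩ := hcon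
  have hcases : (x = x' + 1 ∧ y = y') ∨ (x' = x + 1 ∧ y = y') ∨ (x = x' + 2 ∧ y = y')
      ∨ (x' = x + 2 ∧ y = y') ∨ (x = x' ∧ y = y' + 1) ∨ (x = x' ∧ y' = y + 1)
      ∨ (x = x' ∧ y = y' + 2) ∨ (x = x' ∧ y' = y + 2)
      ∨ (x = x' + 1 ∧ y = y' + 1) ∨ (x = x' + 1 ∧ y = y' + -1)
      ∨ (x' = x + 1 ∧ y' = y + 1) ∨ (x' = x + 1 ∧ y' = y + -1) := by
    clear h C
    omega
  rcases hcases with ⟨e1, e2⟩ | ⟨e1, e2⟩ | ⟨e1, e2⟩ | ⟨e1, e2⟩ | ⟨e1, e2⟩ | ⟨e1, e2⟩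
    | ⟨e1, e2⟩ | ⟨e1, e2⟩ | ⟨e1, e2⟩ | ⟨e1, e2⟩ | ⟨e1, e2⟩ | ⟨e1, e2⟩
  · exact C.valid (sqH1 x' y') (Ccong2 C e1 e2 rfl rfl h)
  · exact C.valid (sqH1 x y) (Ccong2 C e1 e2.symm rfl rfl h.symm)
  · exact C.valid (sqH2 x' y') (Ccong2 C e1 e2 rfl rfl h)
  · exact C.valid (sqH2 x y) (Ccong2 C e1 e2.symm rfl rfl h.symm)
  · exact C.valid (sqV1 x' y') (Ccong2 C e1 e2 rfl rfl h)
  · exact C.valid (sqV1 x y) (Ccong2 C e1.symm e2 rfl rfl h.symm)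
  · exact C.valid (sqV2 x' y') (Ccong2 C e1 e2 rfl rfl h)
  · exact C.valid (sqV2 x y) (Ccong2 C e1.symm e2 rfl rfl h.symm)
  · exact C.valid (sqD x' y' 1 (Or.inl rfl)) (Ccong2 C e1 e2 rfl rfl h)
  · exact C.valid (sqD x' y' (-1) (Or.inr rfl)) (Ccong2 C e1 e2 rfl rfl h)
  · exact C.valid (sqD x y 1 (Or.inl rfl)) (Ccong2 C e1 e2 rfl rfl h.symm)
  · exact C.valid (sqD x y (-1) (Or.inr rfl)) (Ccong2 C e1 e2 rfl rfl h.symm)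
variable (m n) in
def colf : Fin m × Fin n → ZMod 5 :=
  fun p => (((p.1.val : ℤ) + 2 * (p.2.val : ℤ) : ℤ) : ZMod 5)

lemma colπ (h5m : 5 ∣ m) (h5n : 5 ∣ n) (x y : ℤ) :
    colf m n (π x y) = ((x + 2*y : ℤ) : ZMod 5) := by
  unfold colf πt
  simp only
  rw [ι_val m (by omega) x, ι_val n (by omega) y]
  have d1 : (5:ℤ) ∣ (m:ℤ) := by exact_mod_cast Int.natCast_dvd_natCast.mpr h5m
  have d2 : (5:ℤ) ∣ (n:ℤ) := by exact_mod_cast Int.natCast_dvd_natCast.mpr h5n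
  have hd : (5:ℤ) ∣ (x % m + 2 * (y % n)) - (x + 2*y) := by
    have hx : x % m - x = -((m:ℤ) * (x / m)) := by rw [Int.emod_def]; ring
    have hy : y % n - y = -((n:ℤ) * (y / n)) := by rw [Int.emod_def]; ring
    have e : (x % m + 2 * (y % n)) - (x + 2*y) = (x % m - x) + 2*(y % n - y) := by ring
    rw [e, hx, hy]
    exact dvd_add (dvd_neg.mpr (d1.mul_right _)) ((dvd_neg.mpr (d2.mul_right _)).mul_left 2)
  have := (ZMod.intCast_zmod_eq_zero_iff_dvd _ 5).mpr hd
  push_cast at this ⊢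
  linear_combination this

lemma dvd5 {A B : ℤ} (h : ((A : ZMod 5) = (B : ZMod 5))) : (5:ℤ) ∣ A - B := by
  have : ((A - B : ℤ) : ZMod 5) = 0 := by push_cast; rw [h]; ring
  exact (ZMod.intCast_zmod_eq_zero_iff_dvd _ 5).mp this

lemma colValid (hm' : 3 ≤ m) (hn' : 3 ≤ n) (h5m : 5 ∣ m) (h5n : 5 ∣ n) {u v : Fin m × Fin n}
    (hadj : (toroidalGrid m n).square.Adj u v) : colf m n u ≠ colf m n v := by
  have d1 : (5:ℤ) ∣ (m:ℤ) := by exact_mod_cast Int.natCast_dvd_natCast.mpr h5m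
  have d2 : (5:ℤ) ∣ (n:ℤ) := by exact_mod_cast Int.natCast_dvd_natCast.mpr h5n
  rw [square_adj] at hadj
  obtain ⟨hne, he | ⟨w, e1, e2⟩⟩ := hadj
  · obtain ⟨x, y, ε, hε, hc⟩ := tedge_lift (hm := hm') (hn := hn') he
    rcases hc with ⟨ha, hb⟩ | ⟨ha, hb⟩ <;>
      rw [ha, hb, colπ h5m h5n, colπ h5m h5n] <;>
      intro hcol <;>
      have hd := dvd5 hcol <;>
      rcases hε with rfl | rfl <;> omega
  · obtain ⟨x1, y1, ε1, hε1, hc1⟩ := tedge_lift (hm := hm') (hn := hn') e1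
    obtain ⟨x2, y2, ε2, hε2, hc2⟩ := tedge_lift (hm := hm') (hn := hn') e2
    intro hcol
    rcases hc1 with ⟨ha1, hb1⟩ | ⟨ha1, hb1⟩ <;> rcases hc2 with ⟨ha2, hb2⟩ | ⟨ha2, hb2⟩
    · -- HH
      obtain ⟨w1, w2⟩ := π_inj (hm := hm') (hn := hn') (hb1.symm.trans ha2)
      rw [ha1, hb2, colπ h5m h5n, colπ h5m h5n] at hcol
      have hd := dvd5 hcol
      have hx : (5:ℤ) ∣ x1 - (x2 + ε2) := d1.trans w1
      have hy : (5:ℤ) ∣ y1 - y2 := d2.trans w2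
      have h0 : ε1 + ε2 = 0 := by
        rcases hε1 with rfl | rfl <;> rcases hε2 with rfl | rfl <;> omega
      refine hne (ha1.trans ((π_eq_of (hm := hm') (hn := hn') ?_ ?_).trans hb2.symm))
      · have e : (x1+ε1) - x2 = x1 - (x2 + ε2) := by omega
        rw [e]; exact w1
      · exact w2
    · -- HV
      obtain ⟨w1, w2⟩ := π_inj (hm := hm') (hn := hn') (hb1.symm.trans ha2)
      rw [ha1, hb2, colπ h5m h5n, colπ h5m h5n] at hcol
      have hd := dvd5 hcol
      have hx : (5:ℤ) ∣ x1 - x2 := d1.trans w1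
      have hy : (5:ℤ) ∣ y1 - (y2 + ε2) := d2.trans w2
      rcases hε1 with rfl | rfl <;> rcases hε2 with rfl | rfl <;> omega
    · -- VH
      obtain ⟨w1, w2⟩ := π_inj (hm := hm') (hn := hn') (hb1.symm.trans ha2)
      rw [ha1, hb2, colπ h5m h5n, colπ h5m h5n] at hcol
      have hd := dvd5 hcol
      have hx : (5:ℤ) ∣ x1 - (x2 + ε2) := d1.trans w1
      have hy : (5:ℤ) ∣ y1 - y2 := d2.trans w2
      rcases hε1 with rfl | rfl <;> rcases hε2 with rfl | rfl <;> omega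
    · -- VV
      obtain ⟨w1, w2⟩ := π_inj (hm := hm') (hn := hn') (hb1.symm.trans ha2)
      rw [ha1, hb2, colπ h5m h5n, colπ h5m h5n] at hcol
      have hd := dvd5 hcol
      have hx : (5:ℤ) ∣ x1 - x2 := d1.trans w1
      have hy : (5:ℤ) ∣ y1 - (y2 + ε2) := d2.trans w2
      have h0 : ε1 + ε2 = 0 := by
        rcases hε1 with rfl | rfl <;> rcases hε2 with rfl | rfl <;> omega
      refine hne (ha1.trans ((π_eq_of (hm := hm') (hn := hn') ?_ ?_).trans hb2.symm))
      · exact w1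
      · have e : (y1+ε1) - y2 = y1 - (y2 + ε2) := by omega
        rw [e]; exact w2

lemma cliquePts (hm' : 3 ≤ m) (hn' : 3 ≤ n) : ∃ p : Fin 5 → Fin m × Fin n,
    ∀ a b : Fin 5, a ≠ b → (toroidalGrid m n).square.Adj (p a) (p b) := by
  refine ⟨![πt m n hm' hn' 0 0, πt m n hm' hn' 1 0, πt m n hm' hn' (-1) 0, πt m n hm' hn' 0 1, πt m n hm' hn' 0 (-1)], ?_⟩
  have a10 : (toroidalGrid m n).square.Adj (πt m n hm' hn' 1 0) (πt m n hm' hn' 0 0) :=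
    (πt_congr (hm := hm') (hn := hn') (show (0:ℤ)+1 = 1 by norm_num) rfl) ▸ sqH1 0 0
  have a02 : (toroidalGrid m n).square.Adj (πt m n hm' hn' 0 0) (πt m n hm' hn' (-1) 0) :=
    (πt_congr (hm := hm') (hn := hn') (show (-1:ℤ)+1 = 0 by norm_num) rfl) ▸ sqH1 (-1) 0
  have a30 : (toroidalGrid m n).square.Adj (πt m n hm' hn' 0 1) (πt m n hm' hn' 0 0) :=
    (πt_congr (hm := hm') (hn := hn') rfl (show (0:ℤ)+1 = 1 by norm_num)) ▸ sqV1 0 0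
  have a04 : (toroidalGrid m n).square.Adj (πt m n hm' hn' 0 0) (πt m n hm' hn' 0 (-1)) :=
    (πt_congr (hm := hm') (hn := hn') rfl (show (-1:ℤ)+1 = 0 by norm_num)) ▸ sqV1 0 (-1)
  have a12 : (toroidalGrid m n).square.Adj (πt m n hm' hn' 1 0) (πt m n hm' hn' (-1) 0) :=
    (πt_congr (hm := hm') (hn := hn') (show (-1:ℤ)+2 = 1 by norm_num) rfl) ▸ sqH2 (-1) 0
  have a34 : (toroidalGrid m n).square.Adj (πt m n hm' hn' 0 1) (πt m n hm' hn' 0 (-1)) :=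
    (πt_congr (hm := hm') (hn := hn') rfl (show (-1:ℤ)+2 = 1 by norm_num)) ▸ sqV2 0 (-1)
  have a13 : (toroidalGrid m n).square.Adj (πt m n hm' hn' 1 0) (πt m n hm' hn' 0 1) := by
    have := sqD (hm := hm') (hn := hn') 0 1 (-1) (Or.inr rfl)
    exact (πt_congr (show (0:ℤ)+1 = 1 by norm_num)
      (show (1:ℤ)+(-1) = 0 by norm_num) : πt m n hm' hn' (0+1) (1+(-1)) = πt m n hm' hn' 1 0) ▸ this
  have a14 : (toroidalGrid m n).square.Adj (πt m n hm' hn' 1 0) (πt m n hm' hn' 0 (-1)) := by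
    have := sqD (hm := hm') (hn := hn') 0 (-1) 1 (Or.inl rfl)
    exact (πt_congr (show (0:ℤ)+1 = 1 by norm_num)
      (show (-1:ℤ)+1 = 0 by norm_num) : πt m n hm' hn' (0+1) (-1+1) = πt m n hm' hn' 1 0) ▸ this
  have a32 : (toroidalGrid m n).square.Adj (πt m n hm' hn' 0 1) (πt m n hm' hn' (-1) 0) := by
    have := sqD (hm := hm') (hn := hn') (-1) 0 1 (Or.inl rfl)
    exact (πt_congr (show (-1:ℤ)+1 = 0 by norm_num)
      (show (0:ℤ)+1 = 1 by norm_num) : πt m n hm' hn' (-1+1) (0+1) = πt m n hm' hn' 0 1) ▸ this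
  have a42 : (toroidalGrid m n).square.Adj (πt m n hm' hn' 0 (-1)) (πt m n hm' hn' (-1) 0) := by
    have := sqD (hm := hm') (hn := hn') (-1) 0 (-1) (Or.inr rfl)
    exact (πt_congr (show (-1:ℤ)+1 = 0 by norm_num)
      (show (0:ℤ)+(-1) = -1 by norm_num) : πt m n hm' hn' (-1+1) (0+(-1)) = πt m n hm' hn' 0 (-1)) ▸ this
  intro a b hab
  fin_cases a <;> fin_cases b <;>
    simp only [Matrix.cons_val_zero, Matrix.cons_val_one, Matrix.head_cons,
      Matrix.cons_val_two, Matrix.tail_cons, Matrix.cons_val_three, Matrix.cons_val_four] <;>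
    first
      | exact absurd rfl hab
      | exact a10 | exact a10.symm | exact a02 | exact a02.symm
      | exact a30 | exact a30.symm | exact a04 | exact a04.symm
      | exact a12 | exact a12.symm | exact a34 | exact a34.symm
      | exact a13 | exact a13.symm | exact a14 | exact a14.symm
      | exact a32 | exact a32.symm | exact a42 | exact a42.symm

lemma notCol4 (hm' : 3 ≤ m) (hn' : 3 ≤ n) : ¬ (toroidalGrid m n).square.Colorable 4 := by
  intro h
  obtain ⟨C⟩ := h
  obtain ⟨p, hp⟩ := cliquePts hm' hn'
  obtain ⟨a, b, hab, he⟩ := Fintype.exists_ne_map_eq_of_card_lt (fun k : Fin 5 => C (p k))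
    (by simp)
  exact C.valid (hp a b hab) he

end Torus

end TGAux

theorem chromatic_square_toroidal_grid_eq_five_iff (m n : ℕ) (hm : 3 ≤ m) (hn : 3 ≤ n) :
    (toroidalGrid m n).square.chromaticNumber = 5 ↔ (m % 5 = 0 ∧ n % 5 = 0) := by
  constructor
  · intro h
    have hcol : (toroidalGrid m n).square.Colorable 5 := by
      rw [show (5 : ℕ∞) = ((5 : ℕ) : ℕ∞) by rfl] at h
      exact SimpleGraph.chromaticNumber_le_iff_colorable.mp (le_of_eq h)
    obtain ⟨C⟩ := hcol
    have hf := TGAux.HFmain (hm := hm) (hn := hn) C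
    have h1 : ∀ x y : ℤ, (fun x y : ℤ => C (TGAux.πt m n hm hn x y)) (x + m) y
        = (fun x y : ℤ => C (TGAux.πt m n hm hn x y)) x y := fun x y =>
      congrArg C (TGAux.π_eq_of (hm := hm) (hn := hn) ⟨1, by ring⟩ ⟨0, by ring⟩)
    have h2 : ∀ x y : ℤ, (fun x y : ℤ => C (TGAux.πt m n hm hn x y)) x (y + n)
        = (fun x y : ℤ => C (TGAux.πt m n hm hn x y)) x y := fun x y =>
      congrArg C (TGAux.π_eq_of (hm := hm) (hn := hn) ⟨0, by ring⟩ ⟨1, by ring⟩)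
    have hd := TGAux.hardMain m n hf h1 h2
    omega
  · rintro ⟨h1, h2⟩
    have h5m : 5 ∣ m := Nat.dvd_of_mod_eq_zero h1
    have h5n : 5 ∣ n := Nat.dvd_of_mod_eq_zero h2
    have hcol : (toroidalGrid m n).square.Colorable 5 := by
      have := (SimpleGraph.Coloring.mk (G := (toroidalGrid m n).square) (TGAux.colf m n)
        (fun {u v} hadj => TGAux.colValid hm hn h5m h5n hadj)).colorable
      rwa [ZMod.card] at this
    have h4 : ¬ (toroidalGrid m n).square.Colorable 4 := TGAux.notCol4 hm hn
    have hle : (toroidalGrid m n).square.chromaticNumber ≤ (5 : ℕ) :=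
      SimpleGraph.chromaticNumber_le_iff_colorable.mpr hcol
    have hge : ¬ ((toroidalGrid m n).square.chromaticNumber ≤ (4 : ℕ)) := fun hc =>
      h4 (SimpleGraph.chromaticNumber_le_iff_colorable.mp hc)
    have hnetop : (toroidalGrid m n).square.chromaticNumber ≠ ⊤ := by
      intro ht
      rw [ht] at hle
      exact absurd (top_le_iff.mp hle) (by simp)
    lift (toroidalGrid m n).square.chromaticNumber to ℕ using hnetop with k hk
    have e1 : k ≤ 5 := by exact_mod_cast hle
    have e2 : ¬ (k ≤ 4) := fun hc => hge (by exact_mod_cast hc)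
    have : k = 5 := by omega
    rw [this]
    rfl
end

section
/- If G is a finite regular graph of degree Δ(G) ≥ 1, then the incidence chromatic number satisfies χ_i(G) = Δ(G) + 1 if and only if the chromatic number of the square satisfies χ(G²) = Δ(G) + 1. -/
open SimpleGraph

section Aux
variable {V : Type*} {G : SimpleGraph V}

/-- The incidence `(w, vw)` for an adjacency `v ~ w`. -/
def Jinc {v w : V} (h : G.Adj v w) : Incidence G :=
  ⟨(w, s(v, w)), ⟨G.mem_edgeSet.mpr h, Sym2.mem_mk_right v w⟩⟩

/-- The incidence `(v, e)` for `e ∈ incidenceSet v`. -/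
def Iinc {v : V} {e : Sym2 V} (h : e ∈ G.incidenceSet v) : Incidence G :=
  ⟨(v, e), ⟨h.1, h.2⟩⟩

lemma adj_Iinc_Iinc {v : V} {e f : Sym2 V} (he : e ∈ G.incidenceSet v)
    (hf : f ∈ G.incidenceSet v) (hne : e ≠ f) :
    (incidenceGraph G).Adj (Iinc he) (Iinc hf) := by
  refine ⟨fun h => hne ?_, Or.inl rfl⟩
  exact congrArg (fun i : Incidence G => i.1.2) h

lemma adj_Jinc_Iinc {v w : V} {e : Sym2 V} (h : G.Adj v w) (he : e ∈ G.incidenceSet v) :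
    (incidenceGraph G).Adj (Jinc h) (Iinc he) := by
  refine ⟨fun hh => h.ne' ?_, Or.inr (Or.inr (Or.inl ?_))⟩
  · exact congrArg (fun i : Incidence G => i.1.1) hh
  · show s(w, v) = s(v, w)
    exact Sym2.eq_swap

end Aux
section Back
variable {V : Type*} {G : SimpleGraph V}

lemma backward_colorable {n : ℕ} (h : G.square.Colorable n) :
    (incidenceGraph G).Colorable n := by
  obtain ⟨C⟩ := h
  refine ⟨SimpleGraph.Coloring.mk (fun i => C (Sym2.Mem.other i.2.2)) ?_⟩
  rintro ⟨⟨v, e⟩, he, hv⟩ ⟨⟨v', f⟩, hf, hv'⟩ ⟨hne, hcase⟩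
  simp only at hcase
  set w := Sym2.Mem.other hv with hwdef
  set x := Sym2.Mem.other hv' with hxdef
  have hw : s(v, w) = e := Sym2.other_spec hv
  have hx : s(v', x) = f := Sym2.other_spec hv'
  have hadjvw : G.Adj v w := by rw [← SimpleGraph.mem_edgeSet, hw]; exact he
  have hadjvx : G.Adj v' x := by rw [← SimpleGraph.mem_edgeSet, hx]; exact hf
  have othw : ∀ a, a ∈ e → a ≠ v → a = w := by
    intro a ha hav
    rw [← hw, Sym2.mem_iff] at ha
    tauto
  have othx : ∀ a, a ∈ f → a ≠ v' → a = x := by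
    intro a ha hav
    rw [← hx, Sym2.mem_iff] at ha
    tauto
  show C w ≠ C x
  have key : G.square.Adj w x := by
    rcases hcase with h1 | h2 | h3 | h4
    · -- v = v'
      subst h1
      have hef : e ≠ f := by
        intro hef
        exact hne (Subtype.ext (Prod.ext rfl hef))
      have hwx : w ≠ x := by
        intro hh
        apply hef
        rw [← hw, ← hx, hh]
      exact ⟨hwx, Or.inr ⟨v, hadjvw.symm, hadjvx⟩⟩
    · -- e = f
      subst h2
      have hvv' : v ≠ v' := by
        intro hh
        exact hne (Subtype.ext (Prod.ext hh rfl))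
      have hwv' : v' = w := othw v' hv' (Ne.symm hvv')
      have hxv : v = x := othx v hv hvv'
      rw [← hwv'] at hadjvw
      rw [← hwv', ← hxv]
      exact ⟨Ne.symm hvv', Or.inl hadjvw.symm⟩
    · -- s(v,v') = e
      have hvv' : v ≠ v' := by
        rintro rfl
        rw [← h3, SimpleGraph.mem_edgeSet] at he
        exact G.irrefl he
      have hv'e : v' ∈ e := by rw [← h3]; exact Sym2.mem_mk_right v v'
      have hwv' : v' = w := othw v' hv'e (Ne.symm hvv')
      rw [← hwv']
      exact ⟨hadjvx.ne, Or.inl hadjvx⟩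
    · -- s(v,v') = f
      have hvv' : v ≠ v' := by
        rintro rfl
        rw [← h4, SimpleGraph.mem_edgeSet] at hf
        exact G.irrefl hf
      have hvf : v ∈ f := by rw [← h4]; exact Sym2.mem_mk_left v v'
      have hxv : v = x := othx v hvf hvv'
      rw [← hxv]
      exact ⟨hadjvw.ne', Or.inl hadjvw.symm⟩
  exact C.valid key

end Back
section Forward
variable {V : Type*} [Fintype V] (G : SimpleGraph V) [DecidableRel G.Adj]

lemma forward_colorable (hreg : G.IsRegularOfDegree G.maxDegree) (hd : 1 ≤ G.maxDegree)
    (h : (incidenceGraph G).Colorable (G.maxDegree + 1)) :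
    G.square.Colorable (G.maxDegree + 1) := by
  classical
  obtain ⟨φ⟩ := h
  have key : ∀ (v w w' : V) (h1 : G.Adj v w) (h2 : G.Adj v w'),
      φ (Jinc h1) = φ (Jinc h2) := by
    intro v w w' h1 h2
    set S : Finset (Fin (G.maxDegree + 1)) :=
      (G.incidenceFinset v).attach.image
        (fun e => φ (Iinc ((G.mem_incidenceFinset v e.1).mp e.2))) with hS
    have hinj : Function.Injective
        (fun e : {x // x ∈ G.incidenceFinset v} =>
          φ (Iinc ((G.mem_incidenceFinset v e.1).mp e.2))) := by
      intro e1 e2 heq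
      by_contra hne
      have hne' : e1.1 ≠ e2.1 := fun hh => hne (Subtype.ext hh)
      exact φ.valid (adj_Iinc_Iinc _ _ hne') heq
    have hScard : S.card = G.maxDegree := by
      rw [hS, Finset.card_image_of_injective _ hinj, Finset.card_attach,
        SimpleGraph.card_incidenceFinset_eq_degree, hreg v]
    have hnot : ∀ (w : V) (h1 : G.Adj v w), φ (Jinc h1) ∉ S := by
      intro w h1 hmem
      rw [hS, Finset.mem_image] at hmem
      obtain ⟨e, _, heq⟩ := hmem
      exact φ.valid (adj_Jinc_Iinc h1 _) heq.symm
    have hcompl : Sᶜ.card ≤ 1 := by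
      rw [Finset.card_compl, hScard]
      simp
    exact Finset.card_le_one.mp hcompl _ (Finset.mem_compl.mpr (hnot w h1)) _
      (Finset.mem_compl.mpr (hnot w' h2))
  have hnbr : ∀ v : V, ∃ w, G.Adj v w := by
    intro v
    have hpos : 0 < G.degree v := by rw [hreg v]; exact hd
    obtain ⟨w, hw⟩ := Finset.card_pos.mp hpos
    exact ⟨w, (SimpleGraph.mem_neighborFinset G v w).mp hw⟩
  set c : V → Fin (G.maxDegree + 1) := fun v => φ (Jinc (hnbr v).choose_spec) with hc
  have cspec : ∀ {v w : V} (h : G.Adj v w), c v = φ (Jinc h) := by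
    intro v w h
    exact key v _ w (hnbr v).choose_spec h
  refine ⟨SimpleGraph.Coloring.mk c ?_⟩
  rintro u v ⟨hne, hadj | ⟨m, h1, h2⟩⟩
  · rw [cspec hadj, cspec hadj.symm]
    apply φ.valid
    refine ⟨?_, Or.inr (Or.inl ?_)⟩
    · intro hh
      exact hne (congrArg (fun i : Incidence G => i.1.1) hh).symm
    · show s(u, v) = s(v, u)
      exact Sym2.eq_swap
  · rw [cspec h1, cspec h2.symm]
    apply φ.valid
    refine ⟨?_, Or.inl rfl⟩
    intro hh
    have hee : s(u, m) = s(v, m) := congrArg (fun i : Incidence G => i.1.2) hh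
    rw [Sym2.eq_iff] at hee
    rcases hee with ⟨h', _⟩ | ⟨h', h''⟩
    · exact hne h'
    · exact G.irrefl (h' ▸ h1)

end Forward
section Lower
variable {V : Type*} [Fintype V] (G : SimpleGraph V) [DecidableRel G.Adj]

lemma nonempty_of_maxDegree (hd : 1 ≤ G.maxDegree) : Nonempty V := by
  by_contra hV
  rw [not_nonempty_iff] at hV
  have := G.maxDegree_le_of_forall_degree_le 0 (fun v => (hV.false v).elim)
  omega

lemma lb_square (hreg : G.IsRegularOfDegree G.maxDegree) (hd : 1 ≤ G.maxDegree) :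
    ((G.maxDegree + 1 : ℕ) : ℕ∞) ≤ G.square.chromaticNumber := by
  classical
  obtain ⟨v⟩ := nonempty_of_maxDegree G hd
  set s : Finset V := insert v (G.neighborFinset v) with hs
  have hclique : G.square.IsClique ↑s := by
    intro a ha b hb hab
    simp only [hs, Finset.coe_insert, Set.mem_insert_iff, Finset.mem_coe,
      SimpleGraph.mem_neighborFinset] at ha hb
    rcases ha with rfl | ha <;> rcases hb with rfl | hb
    · exact absurd rfl hab
    · exact ⟨hab, Or.inl hb⟩
    · exact ⟨hab, Or.inl ha.symm⟩
    · exact ⟨hab, Or.inr ⟨v, ha.symm, hb⟩⟩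
  have hcard : s.card = G.maxDegree + 1 := by
    rw [hs, Finset.card_insert_of_notMem (G.notMem_neighborFinset_self v),
      SimpleGraph.card_neighborFinset_eq_degree, hreg v]
  calc ((G.maxDegree + 1 : ℕ) : ℕ∞) = (s.card : ℕ∞) := by rw [hcard]
    _ ≤ _ := hclique.card_le_chromaticNumber

lemma lb_inc (hreg : G.IsRegularOfDegree G.maxDegree) (hd : 1 ≤ G.maxDegree) :
    ((G.maxDegree + 1 : ℕ) : ℕ∞) ≤ incidenceChromaticNumber G := by
  classical
  obtain ⟨v⟩ := nonempty_of_maxDegree G hd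
  obtain ⟨w, hw⟩ : ∃ w, G.Adj v w := by
    have hpos : 0 < G.degree v := by rw [hreg v]; exact hd
    obtain ⟨w, hw⟩ := Finset.card_pos.mp hpos
    exact ⟨w, (SimpleGraph.mem_neighborFinset G v w).mp hw⟩
  have hinj : Function.Injective
      (fun e : {x // x ∈ G.incidenceFinset v} =>
        (Iinc ((G.mem_incidenceFinset v e.1).mp e.2) : Incidence G)) := by
    intro e1 e2 heq
    exact Subtype.ext (congrArg (fun i : Incidence G => i.1.2) heq)
  set T : Finset (Incidence G) := insert (Jinc hw)
    ((G.incidenceFinset v).attach.image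
      (fun e => Iinc ((G.mem_incidenceFinset v e.1).mp e.2))) with hT
  have hclique : (incidenceGraph G).IsClique ↑T := by
    intro a ha b hb hab
    simp only [hT, Finset.coe_insert, Set.mem_insert_iff, Finset.mem_coe,
      Finset.mem_image] at ha hb
    rcases ha with rfl | ⟨e, _, rfl⟩ <;> rcases hb with rfl | ⟨f, _, rfl⟩
    · exact absurd rfl hab
    · exact adj_Jinc_Iinc hw _
    · exact (adj_Jinc_Iinc hw _).symm
    · refine adj_Iinc_Iinc _ _ (fun hef => hab ?_)
      exact Subtype.ext (Prod.ext rfl hef)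
  have hnm : (Jinc hw : Incidence G) ∉
      (G.incidenceFinset v).attach.image
        (fun e => Iinc ((G.mem_incidenceFinset v e.1).mp e.2)) := by
    intro hmem
    rw [Finset.mem_image] at hmem
    obtain ⟨e, _, heq⟩ := hmem
    exact hw.ne (congrArg (fun i : Incidence G => i.1.1) heq)
  have hcard : T.card = G.maxDegree + 1 := by
    rw [hT, Finset.card_insert_of_notMem hnm, Finset.card_image_of_injective _ hinj,
      Finset.card_attach, SimpleGraph.card_incidenceFinset_eq_degree, hreg v]
  calc ((G.maxDegree + 1 : ℕ) : ℕ∞) = (T.card : ℕ∞) := by rw [hcard]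
    _ ≤ _ := hclique.card_le_chromaticNumber

end Lower

theorem incidence_chromatic_eq_iff_chromatic_square_eq_of_regular {V : Type*} [Fintype V]
    (G : SimpleGraph V) [DecidableRel G.Adj]
    (hreg : G.IsRegularOfDegree G.maxDegree) (hd : 1 ≤ G.maxDegree) :
    incidenceChromaticNumber G = (G.maxDegree : ℕ∞) + 1 ↔
      G.square.chromaticNumber = (G.maxDegree : ℕ∞) + 1 := by
  have hc : (G.maxDegree : ℕ∞) + 1 = ((G.maxDegree + 1 : ℕ) : ℕ∞) := by push_cast; rfl
  rw [hc]
  constructor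
  · intro h
    have hcol : (incidenceGraph G).Colorable (G.maxDegree + 1) :=
      SimpleGraph.chromaticNumber_le_iff_colorable.mp
        (le_of_eq (show (incidenceGraph G).chromaticNumber = _ from h))
    exact le_antisymm
      (SimpleGraph.chromaticNumber_le_iff_colorable.mpr (forward_colorable G hreg hd hcol))
      (lb_square G hreg hd)
  · intro h
    have hcol : G.square.Colorable (G.maxDegree + 1) :=
      SimpleGraph.chromaticNumber_le_iff_colorable.mp (le_of_eq h)
    exact le_antisymm
      (SimpleGraph.chromaticNumber_le_iff_colorable.mpr (backward_colorable hcol))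
      (lb_inc G hreg hd)
end
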